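/- Fix β ∈ (0,1) and integers s ≥ 1, κ ≥ 2, i ≥ 1, and T₀ with 1 ≤ T₀ ≤ s and κ^{i−1} dividing T₀; set T_j = T₀/κ^j for 0 ≤ j ≤ i−1. For α ∈ (0, 1−β], define Υ(α) = (1 − α/(1−β)) · Σ_{j=0}^{i−1} (β/(α+β))^{(j+1)s − T_{i−j−1}} · (α+β)^{Σ_{q=0}^{j−1} T_{i−1−q}} · (1 − β^{T_{i−j−1}}). Then Υ is strictly decreasing in α on (0, 1−β]: the influence of the recommendation under the decreasing clicking policy (in transient blocks) decreases as α increases. -/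

import Mathlib

private lemma term_rw (β z : ℝ) (hz : 0 < z) (e m : ℕ) (hme : m ≤ e) :
    (β / z) ^ e * z ^ m = β ^ e / z ^ (e - m) := by
  rw [div_pow, pow_sub₀ z (ne_of_gt hz) hme]
  field_simp

/-- For fixed `β ∈ (0,1)`, `s ≥ 1`, `κ ≥ 2`, `i ≥ 1`, `1 ≤ T₀ ≤ s` with
`κ^(i-1) ∣ T₀`, the weight
`Υ(α) = (1 - α/(1-β)) * Σ_{j=0}^{i-1} (β/(α+β))^((j+1)s - T₀/κ^(i-j-1))
          * (α+β)^(Σ_{q=0}^{j-1} T₀/κ^(i-1-q)) * (1 - β^(T₀/κ^(i-j-1)))`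
of the recommendation under the decreasing clicking policy (transient blocks) is strictly
decreasing in `α` on `(0, 1-β]`. -/
theorem decreasing_policy_weight_strictAnti_in_alpha
    (β : ℝ) (hβ0 : 0 < β) (hβ1 : β < 1)
    (s κ i T₀ : ℕ) (hs : 1 ≤ s) (hκ : 2 ≤ κ) (hi : 1 ≤ i)
    (hT₀1 : 1 ≤ T₀) (hT₀s : T₀ ≤ s) (hdvd : κ ^ (i - 1) ∣ T₀) :
    StrictAntiOn (fun α : ℝ =>
        (1 - α / (1 - β)) * ∑ j ∈ Finset.range i,
          (β / (α + β)) ^ ((j + 1) * s - T₀ / κ ^ (i - j - 1)) *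
            (α + β) ^ (∑ q ∈ Finset.range j, T₀ / κ ^ (i - 1 - q)) *
            (1 - β ^ (T₀ / κ ^ (i - j - 1))))
      (Set.Ioc 0 (1 - β)) := by
  have hβ1' : (0:ℝ) < 1 - β := by linarith
  -- basic facts about the exponents
  have hTle : ∀ k : ℕ, T₀ / κ ^ k ≤ s := fun k =>
    le_trans (Nat.div_le_self _ _) hT₀s
  have hTpos : ∀ j : ℕ, 1 ≤ T₀ / κ ^ (i - j - 1) := by
    intro j
    have h1 : κ ^ (i - j - 1) ≤ κ ^ (i - 1) :=
      Nat.pow_le_pow_right (by omega) (by omega)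
    have h2 : κ ^ (i - 1) ≤ T₀ := Nat.le_of_dvd (by omega) hdvd
    have h3 : 0 < κ ^ (i - j - 1) := Nat.pow_pos (by omega)
    exact (Nat.one_le_div_iff h3).mpr (le_trans h1 h2)
  have hME : ∀ j : ℕ, (∑ q ∈ Finset.range j, T₀ / κ ^ (i - 1 - q)) ≤
      (j + 1) * s - T₀ / κ ^ (i - j - 1) := by
    intro j
    have h1 : (∑ q ∈ Finset.range j, T₀ / κ ^ (i - 1 - q)) ≤ j * s := by
      calc (∑ q ∈ Finset.range j, T₀ / κ ^ (i - 1 - q))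
          ≤ ∑ q ∈ Finset.range j, s := Finset.sum_le_sum (fun q _ => hTle _)
        _ = j * s := by simp [Finset.sum_const, mul_comm]
    have h2 : T₀ / κ ^ (i - j - 1) ≤ s := hTle _
    set t := T₀ / κ ^ (i - j - 1) with hts
    have h3 : j * s + s - t = (j + 1) * s - t := by ring_nf
    omega
  intro a ha b hb hab
  simp only
  set E : ℕ → ℕ := fun j => (j + 1) * s - T₀ / κ ^ (i - j - 1) with hE
  set M : ℕ → ℕ := fun j => ∑ q ∈ Finset.range j, T₀ / κ ^ (i - 1 - q) with hM
  set c : ℕ → ℝ := fun j => 1 - β ^ (T₀ / κ ^ (i - j - 1)) with hc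
  obtain ⟨ha0, ha1⟩ := ha
  obtain ⟨hb0, hb1⟩ := hb
  have hza : (0:ℝ) < a + β := by linarith
  have hzb : (0:ℝ) < b + β := by linarith
  have hcpos : ∀ j, 0 < c j := by
    intro j
    have : β ^ (T₀ / κ ^ (i - j - 1)) < 1 :=
      pow_lt_one₀ (le_of_lt hβ0) hβ1 (by have := hTpos j; omega)
    simp [hc]; linarith
  -- rewrite each term
  have hterm : ∀ (x : ℝ), 0 < x + β → ∀ j,
      (β / (x + β)) ^ (E j) * (x + β) ^ (M j) * c j
        = β ^ (E j) / (x + β) ^ (E j - M j) * c j := by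
    intro x hx j
    rw [term_rw β (x + β) hx (E j) (M j) (hME j)]
  -- the sum at a is positive
  have hSa : 0 < ∑ j ∈ Finset.range i,
      (β / (a + β)) ^ (E j) * (a + β) ^ (M j) * c j := by
    apply Finset.sum_pos
    · intro j _
      exact mul_pos (mul_pos (pow_pos (div_pos hβ0 hza) _) (pow_pos hza _)) (hcpos j)
    · exact Finset.nonempty_range_iff.mpr (by omega)
  -- the sum is nonincreasing
  have hSle : (∑ j ∈ Finset.range i, (β / (b + β)) ^ (E j) * (b + β) ^ (M j) * c j)
      ≤ ∑ j ∈ Finset.range i, (β / (a + β)) ^ (E j) * (a + β) ^ (M j) * c j := by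
    apply Finset.sum_le_sum
    intro j _
    rw [hterm a hza j, hterm b hzb j]
    apply mul_le_mul_of_nonneg_right _ (le_of_lt (hcpos j))
    apply div_le_div_of_nonneg_left (le_of_lt (pow_pos hβ0 _)) (pow_pos hza _)
    exact pow_le_pow_left₀ (le_of_lt hza) (by linarith) _
  -- the linear factor
  have hLlt : 1 - b / (1 - β) < 1 - a / (1 - β) := by
    have : a / (1 - β) < b / (1 - β) := by gcongr
    linarith
  have hLb : 0 ≤ 1 - b / (1 - β) := by
    have : b / (1 - β) ≤ 1 := (div_le_one hβ1').mpr hb1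
    linarith
  calc (1 - b / (1 - β)) * ∑ j ∈ Finset.range i,
        (β / (b + β)) ^ (E j) * (b + β) ^ (M j) * c j
      ≤ (1 - b / (1 - β)) * ∑ j ∈ Finset.range i,
        (β / (a + β)) ^ (E j) * (a + β) ^ (M j) * c j :=
        mul_le_mul_of_nonneg_left hSle hLb
    _ < (1 - a / (1 - β)) * ∑ j ∈ Finset.range i,
        (β / (a + β)) ^ (E j) * (a + β) ^ (M j) * c j :=
        mul_lt_mul_of_pos_right hLlt hSa
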